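/- Let μ : [0,∞) → [1,∞) be a differentiable growth rate with K_μ := sup_{t ≥ 0} μ'(t)/μ(t) < +∞. Let U : Δ → B(X) be an evolution operator and P a projection valued function compatible with U such that ‖G(t,s)‖ ≤ M (μ'(s)/μ(s)) (μ(t)/μ(s))^{ω·sign(t−s)} μ(s)^α for all t,s ≥ 0 with t ≠ s, for some ω > 0, α ≥ 0 and M ≥ 1. If there exist p ≥ 1, γ > α, ε ≥ 0 and D > 0 such that ∫₀^{+∞} (μ'(τ)/μ(τ)) (μ(τ)/μ(t))^{pγ·sign(τ−t)} ‖G(τ,t)x‖^p dτ ≤ D μ(t)^{pε} ‖x‖^p for every t ≥ 0 and x ∈ X, then U has a nonuniform μ-dichotomy with projection valued function P. -/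

import Mathlib

open Real MeasureTheory Filter

noncomputable section

/-- A growth rate: an increasing function `μ : [0,∞) → [1,∞)` with `μ 0 = 1` and
`μ t → ∞` as `t → ∞`. -/
def IsGrowthRate (μ : ℝ → ℝ) : Prop :=
  (∀ t, 0 ≤ t → 1 ≤ μ t) ∧ MonotoneOn μ (Set.Ici 0) ∧ μ 0 = 1 ∧
    Filter.Tendsto μ Filter.atTop Filter.atTop

variable {X : Type*} [NormedAddCommGroup X] [NormedSpace ℝ X]

/-- An evolution operator on `X`. -/
def IsEvolutionOperator (U : ℝ → ℝ → X →L[ℝ] X) : Prop :=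
  (∀ t, 0 ≤ t → U t t = 1) ∧
  (∀ s τ t, 0 ≤ s → s ≤ τ → τ ≤ t → (U t τ).comp (U τ s) = U t s) ∧
  (∀ x : X, ContinuousOn (fun q : ℝ × ℝ => U q.1 q.2 x) {q : ℝ × ℝ | 0 ≤ q.2 ∧ q.2 ≤ q.1})

/-- A (strongly continuous) projection valued function. -/
def IsProjectionValued (P : ℝ → X →L[ℝ] X) : Prop :=
  (∀ t, 0 ≤ t → (P t).comp (P t) = P t) ∧
  (∀ x : X, ContinuousOn (fun t => P t x) (Set.Ici 0))

/-- `P` is compatible with the evolution operator `U`; `V s t` plays the role of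
`U_Q(s,t)`, the inverse of the restriction `U(t,s)|_{Q(s)X} : Q(s)X → Q(t)X`,
where `Q t = 1 - P t`. -/
def CompatibleProjection (U V : ℝ → ℝ → X →L[ℝ] X) (P : ℝ → X →L[ℝ] X) : Prop :=
  (∀ s t, 0 ≤ s → s ≤ t → (P t).comp (U t s) = (U t s).comp (P s)) ∧
  (∀ s t, 0 ≤ s → s ≤ t → ∀ x : X,
    (1 - P s) (V s t ((1 - P t) x)) = V s t ((1 - P t) x)) ∧
  (∀ s t, 0 ≤ s → s ≤ t → ∀ x : X, U t s (V s t ((1 - P t) x)) = (1 - P t) x) ∧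
  (∀ s t, 0 ≤ s → s ≤ t → ∀ x : X, V s t (U t s ((1 - P s) x)) = (1 - P s) x)

/-- Nonuniform μ-dichotomy. -/
def NonuniformMuDichotomy (μ : ℝ → ℝ) (U V : ℝ → ℝ → X →L[ℝ] X)
    (P : ℝ → X →L[ℝ] X) : Prop :=
  ∃ a b ε N₁ N₂ : ℝ, 0 < a ∧ 0 < b ∧ 0 ≤ ε ∧ 1 ≤ N₁ ∧ 1 ≤ N₂ ∧
    ∀ s t, 0 ≤ s → s ≤ t →
      ‖(U t s).comp (P s)‖ ≤ N₁ * (μ t / μ s) ^ (-a) * μ s ^ ε ∧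
      ‖(V s t).comp (1 - P t)‖ ≤ N₂ * (μ t / μ s) ^ (-b) * μ t ^ ε

/-- Uniform μ-dichotomy (the case ε = 0). -/
def UniformMuDichotomy (μ : ℝ → ℝ) (U V : ℝ → ℝ → X →L[ℝ] X)
    (P : ℝ → X →L[ℝ] X) : Prop :=
  ∃ a b N₁ N₂ : ℝ, 0 < a ∧ 0 < b ∧ 1 ≤ N₁ ∧ 1 ≤ N₂ ∧
    ∀ s t, 0 ≤ s → s ≤ t →
      ‖(U t s).comp (P s)‖ ≤ N₁ * (μ t / μ s) ^ (-a) ∧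
      ‖(V s t).comp (1 - P t)‖ ≤ N₂ * (μ t / μ s) ^ (-b)

/-- The Green function associated to `U` and `P`:
`G(t,s) = U(t,s)P(s)` for `t > s` and `G(t,s) = -U_Q(t,s)Q(s)` for `t < s`. -/
def greenFunction (U V : ℝ → ℝ → X →L[ℝ] X) (P : ℝ → X →L[ℝ] X) (t s : ℝ) :
    X →L[ℝ] X :=
  if s < t then (U t s).comp (P s)
  else if t < s then -((V t s).comp (1 - P s))
  else 0

/-- Membership in the class `H^μ_{γ,p}(P)`. -/
def MemHClass (μ : ℝ → ℝ) (P : ℝ → X →L[ℝ] X) (γ p : ℝ) (H : ℝ → X →L[ℝ] X) : Prop :=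
  (∀ x : X, ContinuousOn (fun t => H t x) (Set.Ici 0)) ∧
  (∀ t, 0 ≤ t → ∀ x : X,
    ‖H t x‖ ≤ (deriv μ t / μ t) ^ (1 / p) * μ t ^ γ * ‖P t x‖ +
      (deriv μ t / μ t) ^ (1 / p) * μ t ^ (-γ) * ‖(1 - P t) x‖)



private lemma aux_rpow_root {p A R : ℝ} (hp : 0 < p) (hA : 0 ≤ A) (hR : 0 ≤ R)
    (h : A ^ p ≤ R ^ p) : A ≤ R := by
  by_contra hlt
  exact absurd h (not_le.2 (Real.rpow_lt_rpow hR (not_le.1 hlt) hp))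

private lemma aux_deriv_nonneg (μ : ℝ → ℝ) (hmono : MonotoneOn μ (Set.Ici 0))
    {t : ℝ} (ht : 0 ≤ t) (hd : DifferentiableAt ℝ μ t) : 0 ≤ deriv μ t := by
  have h := hd.hasDerivAt
  rw [hasDerivAt_iff_tendsto_slope] at h
  have hsub : Set.Ioi t ⊆ {t}ᶜ := fun y (hy : t < y) => ne_of_gt hy
  have h' := h.mono_left (nhdsWithin_mono t hsub)
  refine ge_of_tendsto h' ?_
  refine eventually_nhdsWithin_of_forall fun y hy => ?_
  have hty : t < y := hy
  rw [slope_def_field]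
  exact div_nonneg (sub_nonneg.2 (hmono (Set.mem_Ici.2 ht)
    (Set.mem_Ici.2 (ht.trans hty.le)) hty.le)) (sub_nonneg.2 hty.le)


private lemma aux_integral (μ : ℝ → ℝ) (K : ℝ)
    (hdiff : ∀ t, 0 ≤ t → DifferentiableAt ℝ μ t)
    (hpos : ∀ t, 0 ≤ t → 0 < μ t)
    (hdK : ∀ t, 0 ≤ t → deriv μ t / μ t ≤ K)
    (hdnn : ∀ t, 0 ≤ t → 0 ≤ deriv μ t)
    {r t : ℝ} (hr : 0 ≤ r) (hrt : r < t)
    (hert : μ t = Real.exp 1 * μ r)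
    {c Dtot : ℝ} (hc : 0 ≤ c) (hD : 0 ≤ Dtot)
    {F : ℝ → ℝ}
    (hF : ∀ τ ∈ Set.Ioo r t, c * (deriv μ τ / μ τ) ≤ F τ)
    (hFint : ∫⁻ τ in Set.Ioi (0:ℝ), ENNReal.ofReal (F τ) ≤ ENNReal.ofReal Dtot) :
    c ≤ Dtot := by
  have hg_meas : AEMeasurable (fun τ => deriv μ τ / μ τ)
      (volume.restrict (Set.Ioc r t)) := by
    refine (measurable_deriv μ).aemeasurable.div ?_
    refine (continuousOn_of_forall_continuousAt fun x hx => ?_).aemeasurable measurableSet_Ioc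
    exact (hdiff x (hr.trans hx.1.le)).continuousAt
  have hg_int : MeasureTheory.IntegrableOn (fun τ => deriv μ τ / μ τ) (Set.Ioc r t) := by
    refine MeasureTheory.Integrable.mono' (g := fun _ => K)
      (MeasureTheory.integrableOn_const measure_Ioc_lt_top.ne)
      hg_meas.aestronglyMeasurable ?_
    refine (MeasureTheory.ae_restrict_mem measurableSet_Ioc).mono fun τ hτ => ?_
    have h0 : (0:ℝ) < τ := lt_of_le_of_lt hr hτ.1
    rw [Real.norm_eq_abs, abs_of_nonneg (div_nonneg (hdnn τ h0.le) (hpos τ h0.le).le)]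
    exact hdK τ h0.le
  have hftc : ∫ τ in r..t, deriv μ τ / μ τ = Real.log (μ t) - Real.log (μ r) := by
    apply intervalIntegral.integral_eq_sub_of_hasDerivAt
    · intro x hx
      rw [Set.uIcc_of_le hrt.le] at hx
      have hx0 : 0 ≤ x := hr.trans hx.1
      exact (hdiff x hx0).hasDerivAt.log (hpos x hx0).ne'
    · rw [intervalIntegrable_iff, Set.uIoc_of_le hrt.le]
      exact hg_int
  have hIoo : ∫ τ in Set.Ioo r t, deriv μ τ / μ τ = 1 := by
    rw [← MeasureTheory.integral_Ioc_eq_integral_Ioo,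
      ← intervalIntegral.integral_of_le hrt.le, hftc, hert,
      Real.log_mul (Real.exp_ne_zero 1) (hpos r hr).ne', Real.log_exp]
    ring
  have key : ENNReal.ofReal c ≤ ENNReal.ofReal Dtot := by
    calc ENNReal.ofReal c
        = ENNReal.ofReal (∫ τ in Set.Ioo r t, c * (deriv μ τ / μ τ)) := by
          rw [MeasureTheory.integral_const_mul, hIoo, mul_one]
      _ = ∫⁻ τ in Set.Ioo r t, ENNReal.ofReal (c * (deriv μ τ / μ τ)) := by
          apply MeasureTheory.ofReal_integral_eq_lintegral_ofReal
          · exact (hg_int.mono_set Set.Ioo_subset_Ioc_self).const_mul c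
          · refine (MeasureTheory.ae_restrict_mem measurableSet_Ioo).mono fun τ hτ => ?_
            have h0 : (0:ℝ) < τ := lt_of_le_of_lt hr hτ.1
            exact mul_nonneg hc (div_nonneg (hdnn τ h0.le) (hpos τ h0.le).le)
      _ ≤ ∫⁻ τ in Set.Ioo r t, ENNReal.ofReal (F τ) :=
          MeasureTheory.lintegral_mono_ae
            ((MeasureTheory.ae_restrict_mem measurableSet_Ioo).mono fun τ hτ =>
              ENNReal.ofReal_le_ofReal (hF τ hτ))
      _ ≤ ∫⁻ τ in Set.Ioi (0:ℝ), ENNReal.ofReal (F τ) :=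
          MeasureTheory.lintegral_mono'
            (MeasureTheory.Measure.restrict_mono
              (fun τ hτ => lt_of_le_of_lt hr hτ.1) le_rfl) le_rfl
      _ ≤ ENNReal.ofReal Dtot := hFint
  exact (ENNReal.ofReal_le_ofReal_iff hD).1 key

private lemma green_pos (U V : ℝ → ℝ → X →L[ℝ] X) (P : ℝ → X →L[ℝ] X)
    {s t : ℝ} (h : s < t) : greenFunction U V P t s = (U t s).comp (P s) := by
  rw [greenFunction, if_pos h]

private lemma green_neg (U V : ℝ → ℝ → X →L[ℝ] X) (P : ℝ → X →L[ℝ] X)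
    {s t : ℝ} (h : t < s) :
    greenFunction U V P t s = -((V t s).comp (1 - P s)) := by
  rw [greenFunction, if_neg (not_lt.2 h.le), if_pos h]

private lemma aux_P_bound (μ : ℝ → ℝ) (K M ω α : ℝ)
    (U V : ℝ → ℝ → X →L[ℝ] X) (P : ℝ → X →L[ℝ] X)
    (hU1 : ∀ t, 0 ≤ t → U t t = 1)
    (hU3 : ∀ x : X, ContinuousOn (fun q : ℝ × ℝ => U q.1 q.2 x)
      {q : ℝ × ℝ | 0 ≤ q.2 ∧ q.2 ≤ q.1})
    (hG : ∀ t s, 0 ≤ t → 0 ≤ s → t ≠ s →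
      ‖greenFunction U V P t s‖ ≤
        M * (deriv μ s / μ s) * (μ t / μ s) ^ (ω * Real.sign (t - s)) * μ s ^ α)
    (hμc : ∀ t, 0 ≤ t → ContinuousAt μ t)
    (hμpos : ∀ t, 0 ≤ t → 0 < μ t)
    (hdK : ∀ t, 0 ≤ t → deriv μ t / μ t ≤ K)
    (hdnn : ∀ t, 0 ≤ t → 0 ≤ deriv μ t)
    (hω : 0 < ω) (hM : 0 ≤ M) (hK : 0 ≤ K)
    {s : ℝ} (hs : 0 ≤ s) (x : X) : ‖P s x‖ ≤ M * K * μ s ^ α * ‖x‖ := by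
  have hμs := hμpos s hs
  have h1 : Filter.Tendsto (fun t => U t s (P s x)) (nhdsWithin s (Set.Ioi s))
      (nhds (P s x)) := by
    have hCW := hU3 (P s x) (s, s) ⟨hs, le_rfl⟩
    have hmap : Filter.Tendsto (fun t : ℝ => ((t, s) : ℝ × ℝ))
        (nhdsWithin s (Set.Ioi s))
        (nhdsWithin (s, s) {q : ℝ × ℝ | 0 ≤ q.2 ∧ q.2 ≤ q.1}) := by
      apply tendsto_nhdsWithin_of_tendsto_nhds_of_eventually_within
      · exact ((continuous_id.prodMk continuous_const).tendsto s).mono_left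
          nhdsWithin_le_nhds
      · exact eventually_nhdsWithin_of_forall fun t (ht : s < t) => ⟨hs, ht.le⟩
    have h := hCW.tendsto.comp hmap
    simpa [hU1 s hs, Function.comp_def] using h
  have h2 : Filter.Tendsto
      (fun t => M * (deriv μ s / μ s) * (μ t / μ s) ^ ω * μ s ^ α * ‖x‖)
      (nhdsWithin s (Set.Ioi s))
      (nhds (M * (deriv μ s / μ s) * μ s ^ α * ‖x‖)) := by
    refine Filter.Tendsto.mono_left ?_ nhdsWithin_le_nhds
    have hbase : ContinuousAt (fun t => (μ t / μ s) ^ ω) s := by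
      have h := (hμc s hs).div continuousAt_const hμs.ne'
      exact h.rpow_const (Or.inr hω.le)
    have hcont : ContinuousAt
        (fun t => M * (deriv μ s / μ s) * (μ t / μ s) ^ ω * μ s ^ α * ‖x‖) s :=
      (((continuousAt_const.mul hbase).mul continuousAt_const).mul continuousAt_const)
    have hval : (μ s / μ s : ℝ) ^ ω = 1 := by
      rw [div_self hμs.ne', Real.one_rpow]
    have := hcont.tendsto
    simp only [hval, mul_one] at this
    exact this
  have h3 : ∀ᶠ t in nhdsWithin s (Set.Ioi s),
      ‖U t s (P s x)‖ ≤ M * (deriv μ s / μ s) * (μ t / μ s) ^ ω * μ s ^ α * ‖x‖ := by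
    refine eventually_nhdsWithin_of_forall fun t (ht : s < t) => ?_
    have e : U t s (P s x) = (greenFunction U V P t s) x := by
      rw [green_pos U V P ht]; rfl
    rw [e]
    have hb := hG t s (hs.trans ht.le) hs ht.ne'
    rw [Real.sign_of_pos (sub_pos.2 ht), mul_one] at hb
    calc ‖(greenFunction U V P t s) x‖ ≤ ‖greenFunction U V P t s‖ * ‖x‖ :=
          (greenFunction U V P t s).le_opNorm x
      _ ≤ M * (deriv μ s / μ s) * (μ t / μ s) ^ ω * μ s ^ α * ‖x‖ :=
          mul_le_mul_of_nonneg_right hb (norm_nonneg x)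
  have hfin := le_of_tendsto_of_tendsto h1.norm h2 h3
  have hXnn : 0 ≤ μ s ^ α * ‖x‖ :=
    mul_nonneg (Real.rpow_nonneg hμs.le α) (norm_nonneg x)
  calc ‖P s x‖ ≤ M * (deriv μ s / μ s) * μ s ^ α * ‖x‖ := hfin
    _ = (deriv μ s / μ s) * (M * (μ s ^ α * ‖x‖)) := by ring
    _ ≤ K * (M * (μ s ^ α * ‖x‖)) :=
        mul_le_mul_of_nonneg_right (hdK s hs) (mul_nonneg hM hXnn)
    _ = M * K * μ s ^ α * ‖x‖ := by ring

private lemma aux_mul3 {c n q a b : ℝ} (hcn : c ≤ n) (hab : a ≤ b) (hq : 0 ≤ q)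
    (ha : 0 ≤ a) (hc : 0 ≤ c) : c * q * a ≤ n * q * b :=
  mul_le_mul (mul_le_mul_of_nonneg_right hcn hq) hab ha
    (mul_nonneg (hc.trans hcn) hq)

set_option maxHeartbeats 1000000 in
/-- Theorem 3.2 (Datko-type theorem): let `μ` be a differentiable growth rate with
`sup_{t ≥ 0} μ'(t)/μ(t) ≤ K_μ < ∞`, and suppose
`‖G(t,s)‖ ≤ M (μ'(s)/μ(s)) (μ(t)/μ(s))^{ω sign(t-s)} μ(s)^α` for `t ≠ s`. If
`∫₀^∞ (μ'(τ)/μ(τ)) (μ(τ)/μ(t))^{pγ sign(τ-t)} ‖G(τ,t)x‖^p dτ ≤ D μ(t)^{pε} ‖x‖^p`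
holds for some `p ≥ 1`, `γ > α`, `ε ≥ 0`, `D > 0`, then `U` has a nonuniform
μ-dichotomy with projection valued function `P`. -/
theorem integral_estimate_implies_dichotomy
    {X : Type*} [NormedAddCommGroup X] [NormedSpace ℝ X] [CompleteSpace X]
    (μ : ℝ → ℝ) (Kμ : ℝ) (hgr : IsGrowthRate μ)
    (hdiff : ∀ t, 0 ≤ t → DifferentiableAt ℝ μ t)
    (hKμ : ∀ t, 0 ≤ t → deriv μ t / μ t ≤ Kμ)
    (U V : ℝ → ℝ → X →L[ℝ] X) (P : ℝ → X →L[ℝ] X)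
    (hU : IsEvolutionOperator U) (hP : IsProjectionValued P)
    (hC : CompatibleProjection U V P)
    (M ω α : ℝ) (hω : 0 < ω) (hα : 0 ≤ α) (hM : 1 ≤ M)
    (hG : ∀ t s, 0 ≤ t → 0 ≤ s → t ≠ s →
      ‖greenFunction U V P t s‖ ≤
        M * (deriv μ s / μ s) * (μ t / μ s) ^ (ω * Real.sign (t - s)) * μ s ^ α)
    (p γ ε D : ℝ) (hp : 1 ≤ p) (hγ : α < γ) (hε : 0 ≤ ε) (hD : 0 < D)
    (hint : ∀ t, 0 ≤ t → ∀ x : X,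
      ∫⁻ τ in Set.Ioi (0 : ℝ), ENNReal.ofReal
          (deriv μ τ / μ τ * (μ τ / μ t) ^ (p * γ * Real.sign (τ - t)) *
            ‖greenFunction U V P τ t x‖ ^ p)
        ≤ ENNReal.ofReal (D * μ t ^ (p * ε) * ‖x‖ ^ p)) :
    NonuniformMuDichotomy μ U V P := by
  obtain ⟨hμ1, hμmono, hμ0, hμtop⟩ := hgr
  obtain ⟨hU1, hU2, hU3⟩ := hU
  obtain ⟨hP1, hP2⟩ := hP
  obtain ⟨hC1, hC2, hC3, hC4⟩ := hC
  have hμpos : ∀ u, 0 ≤ u → 0 < μ u := fun u hu => lt_of_lt_of_le one_pos (hμ1 u hu)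
  have hdnn : ∀ u, 0 ≤ u → 0 ≤ deriv μ u := fun u hu =>
    aux_deriv_nonneg μ hμmono hu (hdiff u hu)
  set K := max Kμ 1 with hKdef
  have hK1 : (1:ℝ) ≤ K := le_max_right _ _
  have hK0 : (0:ℝ) < K := lt_of_lt_of_le one_pos hK1
  have hdK : ∀ u, 0 ≤ u → deriv μ u / μ u ≤ K := fun u hu =>
    (hKμ u hu).trans (le_max_left _ _)
  have hp0 : (0:ℝ) < p := lt_of_lt_of_le one_pos hp
  have hpne : p ≠ 0 := hp0.ne'
  have hM0 : (0:ℝ) ≤ M := le_trans zero_le_one hM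
  have he1 : (1:ℝ) < Real.exp 1 := by
    have := Real.add_one_le_exp (1:ℝ); linarith
  have hDp : (0:ℝ) < D ^ (1/p) := Real.rpow_pos_of_pos hD _
  have hγ0 : (0:ℝ) ≤ γ := hα.trans hγ.le
  have hexpω : (1:ℝ) ≤ Real.exp ω := Real.one_le_exp hω.le
  have hexpγ : (1:ℝ) ≤ Real.exp γ := Real.one_le_exp hγ0
  have hexpα : (1:ℝ) ≤ Real.exp α := Real.one_le_exp hα
  set N := M * K * Real.exp ω * Real.exp γ * Real.exp α * (D ^ (1/p) + 1) + M * K + 1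
    with hNdef
  have hMK1 : (1:ℝ) ≤ M * K := by nlinarith
  have hMK0 : (0:ℝ) ≤ M * K := zero_le_one.trans hMK1
  have heω0 : (0:ℝ) ≤ Real.exp ω := zero_le_one.trans hexpω
  have heγ0 : (0:ℝ) ≤ Real.exp γ := zero_le_one.trans hexpγ
  have heα0 : (0:ℝ) ≤ Real.exp α := zero_le_one.trans hexpα
  have htm0 : (0:ℝ) ≤ M * K * Real.exp ω * Real.exp γ * Real.exp α * (D ^ (1/p) + 1) :=
    mul_nonneg (mul_nonneg (mul_nonneg (mul_nonneg hMK0 heω0) heγ0) heα0)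
      (by linarith)
  have hN1 : (1:ℝ) ≤ N := by rw [hNdef]; linarith
  have hN0 : (0:ℝ) ≤ N := zero_le_one.trans hN1
  have hprod0 : (0:ℝ) ≤ M * K * Real.exp ω * Real.exp γ :=
    mul_nonneg (mul_nonneg hMK0 heω0) heγ0
  have heαD : (1:ℝ) ≤ Real.exp α * (D ^ (1/p) + 1) :=
    le_trans (by linarith : (1:ℝ) ≤ D ^ (1/p) + 1)
      (le_mul_of_one_le_left (by linarith) hexpα)
  have hNfirst : M * K * Real.exp ω * Real.exp γ * (Real.exp α * (D ^ (1/p) + 1)) =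
      M * K * Real.exp ω * Real.exp γ * Real.exp α * (D ^ (1/p) + 1) := by ring
  have hCsmallN : M * K * Real.exp ω * Real.exp γ ≤ N := by
    have e2 := le_mul_of_one_le_right hprod0 heαD
    rw [hNfirst] at e2
    rw [hNdef]
    linarith
  refine ⟨γ - α, γ - α, α + ε, N, N, sub_pos.2 hγ, sub_pos.2 hγ,
    add_nonneg hα hε, hN1, hN1, fun s t hs hst => ?_⟩
  have ht0 : 0 ≤ t := hs.trans hst
  have hμs := hμpos s hs
  have hμt := hμpos t ht0
  have hμst : μ s ≤ μ t := hμmono (Set.mem_Ici.2 hs) (Set.mem_Ici.2 ht0) hst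
  have hq1 : (1:ℝ) ≤ μ t / μ s := (one_le_div hμs).2 hμst
  have hq0 : (0:ℝ) < μ t / μ s := lt_of_lt_of_le one_pos hq1
  have hqnn : (0:ℝ) ≤ μ t / μ s := hq0.le
  have hPx : ∀ u, 0 ≤ u → ∀ x : X, ‖P u x‖ ≤ M * K * μ u ^ α * ‖x‖ :=
    fun u hu x => aux_P_bound μ K M ω α U V P hU1 hU3 hG
      (fun v hv => (hdiff v hv).continuousAt) hμpos hdK hdnn hω hM0 hK0.le hu x
  rcases eq_or_lt_of_le hst with rfl | hlt
  · -- case t = s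
    have hqq : (μ s / μ s : ℝ) ^ (-(γ - α)) = 1 := by
      rw [div_self hμs.ne', Real.one_rpow]
    have hμsa : μ s ^ α ≤ μ s ^ (α + ε) :=
      Real.rpow_le_rpow_of_exponent_le (hμ1 s hs) (le_add_of_nonneg_right hε)
    have hμsa0 : (0:ℝ) ≤ μ s ^ α := Real.rpow_nonneg hμs.le α
    constructor
    · rw [hU1 s hs, hqq, mul_one]
      have h1 : (1 : X →L[ℝ] X).comp (P s) = P s := by
        ext z; simp
      rw [h1]
      refine ContinuousLinearMap.opNorm_le_bound _
        (mul_nonneg hN0 (Real.rpow_nonneg hμs.le _)) fun x => ?_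
      calc ‖P s x‖ ≤ M * K * μ s ^ α * ‖x‖ := hPx s hs x
        _ ≤ N * μ s ^ (α + ε) * ‖x‖ := by
            refine mul_le_mul_of_nonneg_right ?_ (norm_nonneg x)
            refine mul_le_mul ?_ hμsa hμsa0 hN0
            rw [hNdef]; linarith
    · rw [hqq, mul_one]
      have h1 : (V s s).comp (1 - P s) = 1 - P s := by
        ext z
        have h2 := hC3 s s hs le_rfl z
        rw [hU1 s hs] at h2
        simpa using h2
      rw [h1]
      refine ContinuousLinearMap.opNorm_le_bound _
        (mul_nonneg hN0 (Real.rpow_nonneg hμs.le _)) fun x => ?_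
      have h3 : ‖(1 - P s) x‖ ≤ (1 + M * K * μ s ^ α) * ‖x‖ := by
        have := hPx s hs x
        calc ‖(1 - P s) x‖ = ‖x - P s x‖ := by
              simp [ContinuousLinearMap.sub_apply]
          _ ≤ ‖x‖ + ‖P s x‖ := norm_sub_le _ _
          _ ≤ ‖x‖ + M * K * μ s ^ α * ‖x‖ := by linarith
          _ = (1 + M * K * μ s ^ α) * ‖x‖ := by ring
      refine h3.trans (mul_le_mul_of_nonneg_right ?_ (norm_nonneg x))
      have h4 : (1:ℝ) ≤ μ s ^ α := Real.one_le_rpow (hμ1 s hs) hα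
      calc 1 + M * K * μ s ^ α ≤ (1 + M * K) * μ s ^ α := by
            have hr : (1 + M * K) * μ s ^ α = μ s ^ α + M * K * μ s ^ α := by ring
            rw [hr]
            linarith
        _ ≤ N * μ s ^ (α + ε) := by
            refine mul_le_mul ?_ hμsa hμsa0 hN0
            rw [hNdef]; linarith
  rcases le_or_gt (μ t) (Real.exp 1 * μ s) with hsmall | hbig
  · -- small gap
    have hqe : μ t / μ s ≤ Real.exp 1 := (div_le_iff₀ hμs).2 (by linarith)
    have hqγ : (μ t / μ s) ^ (γ - α) ≤ Real.exp γ := by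
      calc (μ t / μ s) ^ (γ - α) ≤ Real.exp 1 ^ (γ - α) :=
            Real.rpow_le_rpow hqnn hqe (sub_pos.2 hγ).le
        _ ≤ Real.exp 1 ^ γ :=
            Real.rpow_le_rpow_of_exponent_le he1.le (by linarith)
        _ = Real.exp γ := Real.exp_one_rpow γ
    have hone : (1:ℝ) ≤ Real.exp γ * (μ t / μ s) ^ (-(γ - α)) := by
      rw [Real.rpow_neg hqnn]
      have hqp : (0:ℝ) < (μ t / μ s) ^ (γ - α) := Real.rpow_pos_of_pos hq0 _
      calc (1:ℝ) = (μ t / μ s) ^ (γ - α) * ((μ t / μ s) ^ (γ - α))⁻¹ := by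
            rw [mul_inv_cancel₀ hqp.ne']
        _ ≤ Real.exp γ * ((μ t / μ s) ^ (γ - α))⁻¹ :=
            mul_le_mul_of_nonneg_right hqγ (inv_nonneg.2 hqp.le)
    constructor
    · -- P small gap
      have hb := hG t s ht0 hs hlt.ne'
      rw [Real.sign_of_pos (sub_pos.2 hlt), mul_one, green_pos U V P hlt] at hb
      refine ContinuousLinearMap.opNorm_le_bound _
        (mul_nonneg (mul_nonneg hN0 (Real.rpow_nonneg hqnn _))
          (Real.rpow_nonneg hμs.le _)) fun x => ?_
      refine (((U t s).comp (P s)).le_opNorm x).trans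
        (mul_le_mul_of_nonneg_right (hb.trans ?_) (norm_nonneg x))
      have hωe : (μ t / μ s) ^ ω ≤ Real.exp ω := by
        rw [← Real.exp_one_rpow ω]
        exact Real.rpow_le_rpow hqnn hqe hω.le
      have hμsa0 : (0:ℝ) ≤ μ s ^ α := Real.rpow_nonneg hμs.le α
      have hstep : M * (deriv μ s / μ s) * (μ t / μ s) ^ ω * μ s ^ α
          ≤ M * K * Real.exp ω * μ s ^ α := by
        have hdn : 0 ≤ deriv μ s / μ s := div_nonneg (hdnn s hs) hμs.le
        have hgn : 0 ≤ (μ t / μ s) ^ ω := Real.rpow_nonneg hqnn _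
        refine mul_le_mul_of_nonneg_right ?_ hμsa0
        exact mul_le_mul (mul_le_mul_of_nonneg_left (hdK s hs) hM0) hωe hgn hMK0
      refine hstep.trans ?_
      calc M * K * Real.exp ω * μ s ^ α
          ≤ M * K * Real.exp ω * μ s ^ α *
            (Real.exp γ * (μ t / μ s) ^ (-(γ - α))) := by
            exact le_mul_of_one_le_right
              (mul_nonneg (mul_nonneg hMK0 heω0) hμsa0) hone
        _ = M * K * Real.exp ω * Real.exp γ * (μ t / μ s) ^ (-(γ - α)) * μ s ^ α := by
            ring
        _ ≤ N * (μ t / μ s) ^ (-(γ - α)) * μ s ^ (α + ε) := by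
            refine aux_mul3 hCsmallN ?_ (Real.rpow_nonneg hqnn _) hμsa0 hprod0
            exact Real.rpow_le_rpow_of_exponent_le (hμ1 s hs) (le_add_of_nonneg_right hε)
    · -- Q small gap
      have hb := hG s t hs ht0 hlt.ne
      rw [Real.sign_of_neg (sub_neg.2 hlt), green_neg U V P hlt] at hb
      rw [norm_neg] at hb
      have hflip : (μ s / μ t) ^ (ω * (-1)) = (μ t / μ s) ^ ω := by
        rw [mul_neg_one, Real.rpow_neg (div_nonneg hμs.le hμt.le),
          ← Real.inv_rpow (div_nonneg hμs.le hμt.le), inv_div]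
      rw [hflip] at hb
      refine ContinuousLinearMap.opNorm_le_bound _
        (mul_nonneg (mul_nonneg hN0 (Real.rpow_nonneg hqnn _))
          (Real.rpow_nonneg hμt.le _)) fun x => ?_
      refine (((V s t).comp (1 - P t)).le_opNorm x).trans
        (mul_le_mul_of_nonneg_right (hb.trans ?_) (norm_nonneg x))
      have hωe : (μ t / μ s) ^ ω ≤ Real.exp ω := by
        rw [← Real.exp_one_rpow ω]
        exact Real.rpow_le_rpow hqnn hqe hω.le
      have hμta0 : (0:ℝ) ≤ μ t ^ α := Real.rpow_nonneg hμt.le α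
      have hstep : M * (deriv μ t / μ t) * (μ t / μ s) ^ ω * μ t ^ α
          ≤ M * K * Real.exp ω * μ t ^ α := by
        have hdn : 0 ≤ deriv μ t / μ t := div_nonneg (hdnn t ht0) hμt.le
        have hgn : 0 ≤ (μ t / μ s) ^ ω := Real.rpow_nonneg hqnn _
        refine mul_le_mul_of_nonneg_right ?_ hμta0
        exact mul_le_mul (mul_le_mul_of_nonneg_left (hdK t ht0) hM0) hωe hgn hMK0
      refine hstep.trans ?_
      calc M * K * Real.exp ω * μ t ^ α
          ≤ M * K * Real.exp ω * μ t ^ α *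
            (Real.exp γ * (μ t / μ s) ^ (-(γ - α))) := by
            exact le_mul_of_one_le_right
              (mul_nonneg (mul_nonneg hMK0 heω0) hμta0) hone
        _ = M * K * Real.exp ω * Real.exp γ * (μ t / μ s) ^ (-(γ - α)) * μ t ^ α := by
            ring
        _ ≤ N * (μ t / μ s) ^ (-(γ - α)) * μ t ^ (α + ε) := by
            refine aux_mul3 hCsmallN ?_ (Real.rpow_nonneg hqnn _) hμta0 hprod0
            exact Real.rpow_le_rpow_of_exponent_le (hμ1 t ht0) (le_add_of_nonneg_right hε)
  -- large gap
  constructor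
  · -- P large gap
    have hconts : ContinuousOn μ (Set.Icc s t) := fun u hu =>
      ((hdiff u (hs.trans hu.1)).continuousAt).continuousWithinAt
    have hmem : μ t / Real.exp 1 ∈ Set.Icc (μ s) (μ t) :=
      ⟨(le_div_iff₀ (Real.exp_pos 1)).2 (by linarith), div_le_self hμt.le he1.le⟩
    obtain ⟨r, hrmem, hμr⟩ := intermediate_value_Icc hst hconts hmem
    have hr0 : 0 ≤ r := hs.trans hrmem.1
    have hμrpos : 0 < μ r := hμpos r hr0
    have hrt : r < t := by
      rcases lt_or_eq_of_le hrmem.2 with h | h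
      · exact h
      · exfalso
        have hlt2 := div_lt_self hμt he1
        rw [← hμr, h] at hlt2
        exact lt_irrefl _ hlt2
    have hert : μ t = Real.exp 1 * μ r := by rw [hμr]; field_simp
    set CK := M * K * Real.exp ω * Real.exp γ with hCKdef
    have hCK0 : (0:ℝ) < CK := by
      rw [hCKdef]
      have a1 : (1:ℝ) ≤ M * K * Real.exp ω :=
        hMK1.trans (le_mul_of_one_le_right hMK0 hexpω)
      have a2 : (1:ℝ) ≤ M * K * Real.exp ω * Real.exp γ :=
        a1.trans (le_mul_of_one_le_right (by linarith) hexpγ)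
      linarith
    refine ContinuousLinearMap.opNorm_le_bound _
      (mul_nonneg (mul_nonneg hN0 (Real.rpow_nonneg hqnn _))
        (Real.rpow_nonneg hμs.le _)) fun x => ?_
    have hyx : ((U t s).comp (P s)) x = U t s (P s x) := rfl
    set A := (μ t / μ s) ^ γ * μ t ^ (-α) * ‖U t s (P s x)‖ with hAdef
    have hA0 : 0 ≤ A := mul_nonneg (mul_nonneg (Real.rpow_nonneg hqnn _)
      (Real.rpow_nonneg hμt.le _)) (norm_nonneg _)
    have hKEY : ∀ τ ∈ Set.Ioo r t, A ≤
        CK * ((μ τ / μ s) ^ γ * ‖greenFunction U V P τ s x‖) := by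
      rintro τ ⟨hτ1, hτ2⟩
      have hsτ : s < τ := lt_of_le_of_lt hrmem.1 hτ1
      have hτ0 : 0 ≤ τ := hs.trans hsτ.le
      have hμτ := hμpos τ hτ0
      have hμτt : μ τ ≤ μ t := hμmono (Set.mem_Ici.2 hτ0) (Set.mem_Ici.2 ht0) hτ2.le
      have hμrτ : μ r ≤ μ τ := hμmono (Set.mem_Ici.2 hr0) (Set.mem_Ici.2 hτ0) hτ1.le
      set G1 := ‖greenFunction U V P τ s x‖ with hG1def
      have hG1nn : 0 ≤ G1 := norm_nonneg _
      have cP : P s (P s x) = P s x := by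
        have := DFunLike.congr_fun (hP1 s hs) x; simpa using this
      have e1 : U t s (P s x) =
          (greenFunction U V P t τ) ((greenFunction U V P τ s) x) := by
        rw [green_pos U V P hsτ, green_pos U V P hτ2]
        have c1 : P τ (U τ s (P s x)) = U τ s (P s (P s x)) := by
          have := DFunLike.congr_fun (hC1 s τ hs hsτ.le) (P s x); simpa using this
        have c2 : U t τ (U τ s (P s x)) = U t s (P s x) := by
          have := DFunLike.congr_fun (hU2 s τ t hs hsτ.le hτ2.le) (P s x)
          simpa using this
        simp only [ContinuousLinearMap.coe_comp', Function.comp_apply]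
        rw [c1, cP, c2]
      have e2 : ‖U t s (P s x)‖ ≤ ‖greenFunction U V P t τ‖ * G1 := by
        rw [e1]; exact ContinuousLinearMap.le_opNorm _ _
      have e3 : ‖greenFunction U V P t τ‖ ≤
          M * (deriv μ τ / μ τ) * (μ t / μ τ) ^ ω * μ τ ^ α := by
        have hb := hG t τ ht0 hτ0 hτ2.ne'
        rwa [Real.sign_of_pos (sub_pos.2 hτ2), mul_one] at hb
      have h2 : (μ t / μ τ) ^ ω ≤ Real.exp ω := by
        rw [← Real.exp_one_rpow ω]
        refine Real.rpow_le_rpow (div_nonneg hμt.le hμτ.le) ?_ hω.le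
        rw [div_le_iff₀ hμτ]
        calc μ t = Real.exp 1 * μ r := hert
          _ ≤ Real.exp 1 * μ τ :=
            mul_le_mul_of_nonneg_left hμrτ (Real.exp_pos 1).le
      have h3 : μ τ ^ α ≤ μ t ^ α := Real.rpow_le_rpow hμτ.le hμτt hα
      have key : ‖U t s (P s x)‖ ≤ M * K * Real.exp ω * μ t ^ α * G1 := by
        refine e2.trans (mul_le_mul_of_nonneg_right ?_ hG1nn)
        refine e3.trans ?_
        have hdn : 0 ≤ deriv μ τ / μ τ := div_nonneg (hdnn τ hτ0) hμτ.le
        have hgn : 0 ≤ (μ t / μ τ) ^ ω := Real.rpow_nonneg (div_nonneg hμt.le hμτ.le) _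
        have hτα : 0 ≤ μ τ ^ α := Real.rpow_nonneg hμτ.le _
        refine mul_le_mul ?_ h3 hτα (mul_nonneg hMK0 heω0)
        exact mul_le_mul (mul_le_mul_of_nonneg_left (hdK τ hτ0) hM0) h2 hgn hMK0
      have hsplit : (μ t / μ s) ^ γ = Real.exp γ * (μ r / μ s) ^ γ := by
        rw [hert, mul_div_assoc,
          Real.mul_rpow (Real.exp_pos 1).le (div_nonneg hμrpos.le hμs.le),
          Real.exp_one_rpow]
      have hrτ : (μ r / μ s) ^ γ ≤ (μ τ / μ s) ^ γ :=
        Real.rpow_le_rpow (div_nonneg hμrpos.le hμs.le)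
          ((div_le_div_iff_of_pos_right hμs).2 hμrτ) hγ0
      have hcancel : μ t ^ (-α) * μ t ^ α = 1 := by
        rw [← Real.rpow_add hμt, neg_add_cancel, Real.rpow_zero]
      calc A = (μ t / μ s) ^ γ * μ t ^ (-α) * ‖U t s (P s x)‖ := rfl
        _ ≤ (μ t / μ s) ^ γ * μ t ^ (-α) * (M * K * Real.exp ω * μ t ^ α * G1) := by
            refine mul_le_mul_of_nonneg_left key
              (mul_nonneg (Real.rpow_nonneg hqnn _) (Real.rpow_nonneg hμt.le _))
        _ = M * K * Real.exp ω * (μ t ^ (-α) * μ t ^ α) * ((μ t / μ s) ^ γ * G1) := by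
            ring
        _ = M * K * Real.exp ω * ((μ t / μ s) ^ γ * G1) := by
            rw [hcancel, mul_one]
        _ = M * K * Real.exp ω * (Real.exp γ * (μ r / μ s) ^ γ * G1) := by
            rw [hsplit]
        _ = CK * ((μ r / μ s) ^ γ * G1) := by rw [hCKdef]; ring
        _ ≤ CK * ((μ τ / μ s) ^ γ * G1) := by
            exact mul_le_mul_of_nonneg_left
              (mul_le_mul_of_nonneg_right hrτ hG1nn) hCK0.le
    have hcA0 : 0 ≤ CK⁻¹ * A := mul_nonneg (inv_nonneg.2 hCK0.le) hA0
    have hFb : ∀ τ ∈ Set.Ioo r t, (CK⁻¹ * A) ^ p * (deriv μ τ / μ τ) ≤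
        deriv μ τ / μ τ * (μ τ / μ s) ^ (p * γ * Real.sign (τ - s)) *
          ‖greenFunction U V P τ s x‖ ^ p := by
      rintro τ ⟨hτ1, hτ2⟩
      have hsτ : s < τ := lt_of_le_of_lt hrmem.1 hτ1
      have hτ0 : 0 ≤ τ := hs.trans hsτ.le
      have hμτ := hμpos τ hτ0
      rw [Real.sign_of_pos (sub_pos.2 hsτ), mul_one]
      have hWn : (0:ℝ) ≤ (μ τ / μ s) ^ γ := Real.rpow_nonneg (div_nonneg hμτ.le hμs.le) _
      have hb : CK⁻¹ * A ≤ (μ τ / μ s) ^ γ * ‖greenFunction U V P τ s x‖ := by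
        rw [inv_mul_le_iff₀ hCK0]
        exact hKEY τ ⟨hτ1, hτ2⟩
      have hbp : (CK⁻¹ * A) ^ p ≤
          ((μ τ / μ s) ^ γ * ‖greenFunction U V P τ s x‖) ^ p :=
        Real.rpow_le_rpow hcA0 hb hp0.le
      have hexpand : ((μ τ / μ s) ^ γ * ‖greenFunction U V P τ s x‖) ^ p
          = (μ τ / μ s) ^ (p * γ) * ‖greenFunction U V P τ s x‖ ^ p := by
        rw [Real.mul_rpow hWn (norm_nonneg _),
          ← Real.rpow_mul (div_nonneg hμτ.le hμs.le), mul_comm γ p]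
      have hdn : 0 ≤ deriv μ τ / μ τ := div_nonneg (hdnn τ hτ0) hμτ.le
      calc (CK⁻¹ * A) ^ p * (deriv μ τ / μ τ)
          ≤ ((μ τ / μ s) ^ (p * γ) * ‖greenFunction U V P τ s x‖ ^ p) *
            (deriv μ τ / μ τ) :=
            mul_le_mul_of_nonneg_right (hexpand ▸ hbp) hdn
        _ = deriv μ τ / μ τ * (μ τ / μ s) ^ (p * γ) *
            ‖greenFunction U V P τ s x‖ ^ p := by ring
    have hDtot0 : 0 ≤ D * μ s ^ (p * ε) * ‖x‖ ^ p :=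
      mul_nonneg (mul_nonneg hD.le (Real.rpow_nonneg hμs.le _))
        (Real.rpow_nonneg (norm_nonneg _) _)
    have hfin := aux_integral μ K hdiff hμpos hdK hdnn hr0 hrt hert
      (Real.rpow_nonneg hcA0 p) hDtot0 hFb (hint s hs x)
    have hR0 : 0 ≤ D ^ (1/p) * μ s ^ ε * ‖x‖ :=
      mul_nonneg (mul_nonneg hDp.le (Real.rpow_nonneg hμs.le _)) (norm_nonneg _)
    have hAle : CK⁻¹ * A ≤ D ^ (1/p) * μ s ^ ε * ‖x‖ := by
      refine aux_rpow_root hp0 hcA0 hR0 ?_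
      have hRp : (D ^ (1/p) * μ s ^ ε * ‖x‖) ^ p = D * μ s ^ (p * ε) * ‖x‖ ^ p := by
        rw [Real.mul_rpow (mul_nonneg hDp.le (Real.rpow_nonneg hμs.le ε)) (norm_nonneg x),
          Real.mul_rpow hDp.le (Real.rpow_nonneg hμs.le ε),
          ← Real.rpow_mul hD.le, ← Real.rpow_mul hμs.le,
          one_div_mul_cancel hpne, Real.rpow_one, mul_comm ε p]
      rw [hRp]; exact hfin
    have hAle2 : A ≤ CK * (D ^ (1/p) * μ s ^ ε * ‖x‖) := by
      rwa [inv_mul_le_iff₀ hCK0] at hAle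
    have hqγpos : (0:ℝ) < (μ t / μ s) ^ γ := Real.rpow_pos_of_pos hq0 _
    have hμtαpos : (0:ℝ) < μ t ^ α := Real.rpow_pos_of_pos hμt _
    have hcanc : ‖U t s (P s x)‖ = (μ t / μ s) ^ (-γ) * μ t ^ α * A := by
      rw [hAdef, Real.rpow_neg hqnn, Real.rpow_neg hμt.le]
      field_simp
    have hfin2 : ‖U t s (P s x)‖ ≤
        (μ t / μ s) ^ (-γ) * μ t ^ α * (CK * (D ^ (1/p) * μ s ^ ε * ‖x‖)) := by
      rw [hcanc]
      exact mul_le_mul_of_nonneg_left hAle2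
        (mul_nonneg (Real.rpow_nonneg hqnn _) (Real.rpow_nonneg hμt.le _))
    have hid : (μ t / μ s) ^ (-γ) * μ t ^ α = (μ t / μ s) ^ (-(γ - α)) * μ s ^ α := by
      have h1 : μ t ^ α = (μ t / μ s) ^ α * μ s ^ α := by
        rw [Real.div_rpow hμt.le hμs.le]
        field_simp
      rw [h1, ← mul_assoc, ← Real.rpow_add hq0]
      have hex : -γ + α = -(γ - α) := by ring
      rw [hex]
    have hμsε0 : (0:ℝ) ≤ μ s ^ ε := Real.rpow_nonneg hμs.le _
    have hCN : CK * D ^ (1/p) ≤ N := by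
      have hdle : D ^ (1/p) ≤ Real.exp α * (D ^ (1/p) + 1) :=
        le_trans (by linarith) (le_mul_of_one_le_left (by linarith) hexpα)
      have e2 := mul_le_mul_of_nonneg_left hdle hprod0
      rw [hNdef]
      rw [← hNfirst]
      linarith
    calc ‖((U t s).comp (P s)) x‖ = ‖U t s (P s x)‖ := rfl
      _ ≤ (μ t / μ s) ^ (-γ) * μ t ^ α * (CK * (D ^ (1/p) * μ s ^ ε * ‖x‖)) := hfin2
      _ = CK * D ^ (1/p) * ((μ t / μ s) ^ (-γ) * μ t ^ α) * (μ s ^ ε * ‖x‖) := by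
          ring
      _ = CK * D ^ (1/p) * ((μ t / μ s) ^ (-(γ - α)) * μ s ^ α) * (μ s ^ ε * ‖x‖) := by
          rw [hid]
      _ = CK * D ^ (1/p) * (μ t / μ s) ^ (-(γ - α)) * (μ s ^ α * μ s ^ ε) * ‖x‖ := by
          ring
      _ = CK * D ^ (1/p) * (μ t / μ s) ^ (-(γ - α)) * μ s ^ (α + ε) * ‖x‖ := by
          rw [← Real.rpow_add hμs]
      _ ≤ N * (μ t / μ s) ^ (-(γ - α)) * μ s ^ (α + ε) * ‖x‖ := by
          refine mul_le_mul_of_nonneg_right ?_ (norm_nonneg x)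
          exact aux_mul3 hCN le_rfl (Real.rpow_nonneg hqnn _)
            (Real.rpow_nonneg hμs.le _) (mul_nonneg hCK0.le hDp.le)
  · -- Q large gap
    have hconts : ContinuousOn μ (Set.Icc s t) := fun u hu =>
      ((hdiff u (hs.trans hu.1)).continuousAt).continuousWithinAt
    have hmem : Real.exp 1 * μ s ∈ Set.Icc (μ s) (μ t) :=
      ⟨le_mul_of_one_le_left hμs.le he1.le, hbig.le⟩
    obtain ⟨r, hrmem, hμr⟩ := intermediate_value_Icc hst hconts hmem
    have hr0 : 0 ≤ r := hs.trans hrmem.1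
    have hμrpos : 0 < μ r := hμpos r hr0
    have hsr : s < r := by
      rcases lt_or_eq_of_le hrmem.1 with h | h
      · exact h
      · exfalso
        rw [← h] at hμr
        nlinarith
    have hrt : r ≤ t := hrmem.2
    set CQ := M * K * Real.exp ω * Real.exp α * Real.exp γ with hCQdef
    have a1 : (1:ℝ) ≤ M * K * Real.exp ω :=
      hMK1.trans (le_mul_of_one_le_right hMK0 hexpω)
    have a2 : (1:ℝ) ≤ M * K * Real.exp ω * Real.exp α :=
      a1.trans (le_mul_of_one_le_right (by linarith) hexpα)
    have hCQ1 : (1:ℝ) ≤ CQ := by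
      rw [hCQdef]
      exact a2.trans (le_mul_of_one_le_right (by linarith) hexpγ)
    have hCQ0 : (0:ℝ) < CQ := lt_of_lt_of_le one_pos hCQ1
    refine ContinuousLinearMap.opNorm_le_bound _
      (mul_nonneg (mul_nonneg hN0 (Real.rpow_nonneg hqnn _))
        (Real.rpow_nonneg hμt.le _)) fun x => ?_
    set A := (μ t / μ s) ^ γ * μ s ^ (-α) * ‖V s t ((1 - P t) x)‖ with hAdef
    have hA0 : 0 ≤ A := mul_nonneg (mul_nonneg (Real.rpow_nonneg hqnn _)
      (Real.rpow_nonneg hμs.le _)) (norm_nonneg _)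
    have hKEY : ∀ τ ∈ Set.Ioo s r, A ≤
        CQ * ((μ t / μ τ) ^ γ * ‖greenFunction U V P τ t x‖) := by
      rintro τ ⟨hτ1, hτ2⟩
      have hsτ : s < τ := hτ1
      have hτ0 : 0 ≤ τ := hs.trans hsτ.le
      have hτt : τ < t := lt_of_lt_of_le hτ2 hrt
      have hμτ := hμpos τ hτ0
      have hμτr : μ τ ≤ μ r := hμmono (Set.mem_Ici.2 hτ0) (Set.mem_Ici.2 hr0) hτ2.le
      set G1 := ‖greenFunction U V P τ t x‖ with hG1def
      have hG1nn : 0 ≤ G1 := norm_nonneg _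
      have h1 : (1 - P τ) (V τ t ((1 - P t) x)) = V τ t ((1 - P t) x) :=
        hC2 τ t hτ0 hτt.le x
      have h2 : U τ s (V s τ ((1 - P τ) (V τ t ((1 - P t) x)))) =
          (1 - P τ) (V τ t ((1 - P t) x)) := hC3 s τ hs hsτ.le _
      have h3 : (1 - P s) (V s τ ((1 - P τ) (V τ t ((1 - P t) x)))) =
          V s τ ((1 - P τ) (V τ t ((1 - P t) x))) := hC2 s τ hs hsτ.le _
      have h4 : U t τ (U τ s (V s τ ((1 - P τ) (V τ t ((1 - P t) x))))) =
          U t s (V s τ ((1 - P τ) (V τ t ((1 - P t) x)))) := by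
        have := DFunLike.congr_fun (hU2 s τ t hs hsτ.le hτt.le)
          (V s τ ((1 - P τ) (V τ t ((1 - P t) x))))
        simpa using this
      have h5 : U t τ (V τ t ((1 - P t) x)) = (1 - P t) x := hC3 τ t hτ0 hτt.le x
      have h6 : U t s (V s τ ((1 - P τ) (V τ t ((1 - P t) x)))) = (1 - P t) x := by
        rw [← h4, h2, h1, h5]
      have h7 := hC4 s t hs hst (V s τ ((1 - P τ) (V τ t ((1 - P t) x))))
      rw [h3, h6] at h7
      have hGy : (greenFunction U V P s τ) (V τ t ((1 - P t) x)) =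
          -(V s τ ((1 - P τ) (V τ t ((1 - P t) x)))) := by
        rw [green_neg U V P hsτ]
        simp
      have hy' : G1 = ‖V τ t ((1 - P t) x)‖ := by
        rw [hG1def, green_neg U V P hτt]
        simp [norm_sub_rev]
      have hE : ‖V s t ((1 - P t) x)‖ ≤ ‖greenFunction U V P s τ‖ * G1 := by
        rw [h7]
        have he : ‖V s τ ((1 - P τ) (V τ t ((1 - P t) x)))‖ =
            ‖(greenFunction U V P s τ) (V τ t ((1 - P t) x))‖ := by
          rw [hGy, norm_neg]
        rw [he, hy']
        exact ContinuousLinearMap.le_opNorm _ _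
      have hb := hG s τ hs hτ0 hsτ.ne
      rw [Real.sign_of_neg (sub_neg.2 hsτ)] at hb
      have hflip : (μ s / μ τ) ^ (ω * (-1)) = (μ τ / μ s) ^ ω := by
        rw [mul_neg_one, Real.rpow_neg (div_nonneg hμs.le hμτ.le),
          ← Real.inv_rpow (div_nonneg hμs.le hμτ.le), inv_div]
      rw [hflip] at hb
      have h2ω : (μ τ / μ s) ^ ω ≤ Real.exp ω := by
        rw [← Real.exp_one_rpow ω]
        refine Real.rpow_le_rpow (div_nonneg hμτ.le hμs.le) ?_ hω.le
        rw [div_le_iff₀ hμs]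
        calc μ τ ≤ μ r := hμτr
          _ = Real.exp 1 * μ s := hμr
      have h3α : μ τ ^ α ≤ Real.exp α * μ s ^ α := by
        calc μ τ ^ α ≤ (Real.exp 1 * μ s) ^ α := by
              refine Real.rpow_le_rpow hμτ.le ?_ hα
              rw [← hμr]; exact hμτr
          _ = Real.exp α * μ s ^ α := by
              rw [Real.mul_rpow (Real.exp_pos 1).le hμs.le, Real.exp_one_rpow]
      have key : ‖V s t ((1 - P t) x)‖ ≤
          M * K * Real.exp ω * (Real.exp α * μ s ^ α) * G1 := by
        refine hE.trans (mul_le_mul_of_nonneg_right ?_ hG1nn)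
        refine hb.trans ?_
        have hdn : 0 ≤ deriv μ τ / μ τ := div_nonneg (hdnn τ hτ0) hμτ.le
        have hgn : 0 ≤ (μ τ / μ s) ^ ω := Real.rpow_nonneg (div_nonneg hμτ.le hμs.le) _
        have hτα : 0 ≤ μ τ ^ α := Real.rpow_nonneg hμτ.le _
        refine mul_le_mul ?_ h3α hτα (mul_nonneg hMK0 heω0)
        exact mul_le_mul (mul_le_mul_of_nonneg_left (hdK τ hτ0) hM0) h2ω hgn hMK0
      have hss : μ t / μ s = Real.exp 1 * (μ t / μ r) := by
        rw [hμr]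
        rw [mul_div_assoc']
        rw [mul_div_mul_left _ _ (Real.exp_ne_zero 1)]
      have hsplit : (μ t / μ s) ^ γ = Real.exp γ * (μ t / μ r) ^ γ := by
        rw [hss, Real.mul_rpow (Real.exp_pos 1).le (div_nonneg hμt.le hμrpos.le),
          Real.exp_one_rpow]
      have hrτ : (μ t / μ r) ^ γ ≤ (μ t / μ τ) ^ γ := by
        refine Real.rpow_le_rpow (div_nonneg hμt.le hμrpos.le) ?_ hγ0
        exact (div_le_div_iff_of_pos_left hμt hμrpos hμτ).2 hμτr
      have hcancel : μ s ^ (-α) * μ s ^ α = 1 := by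
        rw [← Real.rpow_add hμs, neg_add_cancel, Real.rpow_zero]
      calc A = (μ t / μ s) ^ γ * μ s ^ (-α) * ‖V s t ((1 - P t) x)‖ := rfl
        _ ≤ (μ t / μ s) ^ γ * μ s ^ (-α) *
            (M * K * Real.exp ω * (Real.exp α * μ s ^ α) * G1) :=
            mul_le_mul_of_nonneg_left key
              (mul_nonneg (Real.rpow_nonneg hqnn _) (Real.rpow_nonneg hμs.le _))
        _ = M * K * Real.exp ω * Real.exp α * (μ s ^ (-α) * μ s ^ α) *
            ((μ t / μ s) ^ γ * G1) := by ring
        _ = M * K * Real.exp ω * Real.exp α * ((μ t / μ s) ^ γ * G1) := by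
            rw [hcancel, mul_one]
        _ = M * K * Real.exp ω * Real.exp α * (Real.exp γ * (μ t / μ r) ^ γ * G1) := by
            rw [hsplit]
        _ = CQ * ((μ t / μ r) ^ γ * G1) := by rw [hCQdef]; ring
        _ ≤ CQ * ((μ t / μ τ) ^ γ * G1) :=
            mul_le_mul_of_nonneg_left (mul_le_mul_of_nonneg_right hrτ hG1nn) hCQ0.le
    have hcA0 : 0 ≤ CQ⁻¹ * A := mul_nonneg (inv_nonneg.2 hCQ0.le) hA0
    have hFb : ∀ τ ∈ Set.Ioo s r, (CQ⁻¹ * A) ^ p * (deriv μ τ / μ τ) ≤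
        deriv μ τ / μ τ * (μ τ / μ t) ^ (p * γ * Real.sign (τ - t)) *
          ‖greenFunction U V P τ t x‖ ^ p := by
      rintro τ ⟨hτ1, hτ2⟩
      have hτ0 : 0 ≤ τ := hs.trans hτ1.le
      have hτt : τ < t := lt_of_lt_of_le hτ2 hrt
      have hμτ := hμpos τ hτ0
      rw [Real.sign_of_neg (sub_neg.2 hτt)]
      have hflip2 : (μ τ / μ t) ^ (p * γ * (-1)) = (μ t / μ τ) ^ (p * γ) := by
        rw [mul_neg_one, Real.rpow_neg (div_nonneg hμτ.le hμt.le),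
          ← Real.inv_rpow (div_nonneg hμτ.le hμt.le), inv_div]
      rw [hflip2]
      have hWn : (0:ℝ) ≤ (μ t / μ τ) ^ γ :=
        Real.rpow_nonneg (div_nonneg hμt.le hμτ.le) _
      have hb2 : CQ⁻¹ * A ≤ (μ t / μ τ) ^ γ * ‖greenFunction U V P τ t x‖ := by
        rw [inv_mul_le_iff₀ hCQ0]
        exact hKEY τ ⟨hτ1, hτ2⟩
      have hbp : (CQ⁻¹ * A) ^ p ≤
          ((μ t / μ τ) ^ γ * ‖greenFunction U V P τ t x‖) ^ p :=
        Real.rpow_le_rpow hcA0 hb2 hp0.le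
      have hexpand : ((μ t / μ τ) ^ γ * ‖greenFunction U V P τ t x‖) ^ p
          = (μ t / μ τ) ^ (p * γ) * ‖greenFunction U V P τ t x‖ ^ p := by
        rw [Real.mul_rpow hWn (norm_nonneg _),
          ← Real.rpow_mul (div_nonneg hμt.le hμτ.le), mul_comm γ p]
      have hdn : 0 ≤ deriv μ τ / μ τ := div_nonneg (hdnn τ hτ0) hμτ.le
      calc (CQ⁻¹ * A) ^ p * (deriv μ τ / μ τ)
          ≤ ((μ t / μ τ) ^ (p * γ) * ‖greenFunction U V P τ t x‖ ^ p) *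
            (deriv μ τ / μ τ) :=
            mul_le_mul_of_nonneg_right (hexpand ▸ hbp) hdn
        _ = deriv μ τ / μ τ * (μ t / μ τ) ^ (p * γ) *
            ‖greenFunction U V P τ t x‖ ^ p := by ring
    have hDtot0 : 0 ≤ D * μ t ^ (p * ε) * ‖x‖ ^ p :=
      mul_nonneg (mul_nonneg hD.le (Real.rpow_nonneg hμt.le _))
        (Real.rpow_nonneg (norm_nonneg _) _)
    have hfin := aux_integral μ K hdiff hμpos hdK hdnn hs hsr hμr
      (Real.rpow_nonneg hcA0 p) hDtot0 hFb (hint t ht0 x)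
    have hR0 : 0 ≤ D ^ (1/p) * μ t ^ ε * ‖x‖ :=
      mul_nonneg (mul_nonneg hDp.le (Real.rpow_nonneg hμt.le _)) (norm_nonneg _)
    have hAle : CQ⁻¹ * A ≤ D ^ (1/p) * μ t ^ ε * ‖x‖ := by
      refine aux_rpow_root hp0 hcA0 hR0 ?_
      have hRp : (D ^ (1/p) * μ t ^ ε * ‖x‖) ^ p = D * μ t ^ (p * ε) * ‖x‖ ^ p := by
        rw [Real.mul_rpow (mul_nonneg hDp.le (Real.rpow_nonneg hμt.le ε)) (norm_nonneg x),
          Real.mul_rpow hDp.le (Real.rpow_nonneg hμt.le ε),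
          ← Real.rpow_mul hD.le, ← Real.rpow_mul hμt.le,
          one_div_mul_cancel hpne, Real.rpow_one, mul_comm ε p]
      rw [hRp]; exact hfin
    have hAle2 : A ≤ CQ * (D ^ (1/p) * μ t ^ ε * ‖x‖) := by
      rwa [inv_mul_le_iff₀ hCQ0] at hAle
    have hcanc : ‖V s t ((1 - P t) x)‖ = (μ t / μ s) ^ (-γ) * μ s ^ α * A := by
      rw [hAdef, Real.rpow_neg hqnn, Real.rpow_neg hμs.le]
      field_simp
    have hfin2 : ‖V s t ((1 - P t) x)‖ ≤
        (μ t / μ s) ^ (-γ) * μ s ^ α * (CQ * (D ^ (1/p) * μ t ^ ε * ‖x‖)) := by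
      rw [hcanc]
      exact mul_le_mul_of_nonneg_left hAle2
        (mul_nonneg (Real.rpow_nonneg hqnn _) (Real.rpow_nonneg hμs.le _))
    have hmono1 : (μ t / μ s) ^ (-γ) ≤ (μ t / μ s) ^ (-(γ - α)) :=
      Real.rpow_le_rpow_of_exponent_le hq1 (by linarith)
    have hmono2 : μ s ^ α ≤ μ t ^ α := Real.rpow_le_rpow hμs.le hμst hα
    have hCQN : CQ * D ^ (1/p) ≤ N := by
      have q0 : (0:ℝ) ≤ M * K * Real.exp ω * Real.exp γ * Real.exp α :=
        mul_nonneg hprod0 heα0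
      have e2 : M * K * Real.exp ω * Real.exp γ * Real.exp α * D ^ (1/p) ≤
          M * K * Real.exp ω * Real.exp γ * Real.exp α * (D ^ (1/p) + 1) :=
        mul_le_mul_of_nonneg_left (by linarith) q0
      have e3 : CQ * D ^ (1/p) =
          M * K * Real.exp ω * Real.exp γ * Real.exp α * D ^ (1/p) := by
        rw [hCQdef]; ring
      rw [hNdef, e3]
      linarith
    calc ‖((V s t).comp (1 - P t)) x‖ = ‖V s t ((1 - P t) x)‖ := rfl
      _ ≤ (μ t / μ s) ^ (-γ) * μ s ^ α * (CQ * (D ^ (1/p) * μ t ^ ε * ‖x‖)) := hfin2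
      _ = CQ * D ^ (1/p) * (μ t / μ s) ^ (-γ) * μ s ^ α * (μ t ^ ε * ‖x‖) := by
          ring
      _ ≤ CQ * D ^ (1/p) * (μ t / μ s) ^ (-(γ - α)) * μ t ^ α * (μ t ^ ε * ‖x‖) := by
          refine mul_le_mul_of_nonneg_right ?_
            (mul_nonneg (Real.rpow_nonneg hμt.le _) (norm_nonneg x))
          refine mul_le_mul ?_ hmono2 (Real.rpow_nonneg hμs.le _) ?_
          · exact mul_le_mul_of_nonneg_left hmono1 (mul_nonneg hCQ0.le hDp.le)
          · exact mul_nonneg (mul_nonneg hCQ0.le hDp.le) (Real.rpow_nonneg hqnn _)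
      _ = CQ * D ^ (1/p) * (μ t / μ s) ^ (-(γ - α)) * (μ t ^ α * μ t ^ ε) * ‖x‖ := by
          ring
      _ = CQ * D ^ (1/p) * (μ t / μ s) ^ (-(γ - α)) * μ t ^ (α + ε) * ‖x‖ := by
          rw [← Real.rpow_add hμt]
      _ ≤ N * (μ t / μ s) ^ (-(γ - α)) * μ t ^ (α + ε) * ‖x‖ := by
          refine mul_le_mul_of_nonneg_right ?_ (norm_nonneg x)
          exact aux_mul3 hCQN le_rfl (Real.rpow_nonneg hqnn _)
            (Real.rpow_nonneg hμt.le _) (mul_nonneg hCQ0.le hDp.le)
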